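/- Let k ≥ 3 be a real number and Δ ∈ [(k+1)/2, k−1]. If (Δ+1)·Δ·(k−Δ) ≤ k·(k−1), then Δ = k − 1 and equality holds. -/
import Mathlib

/-- If `k ≥ 3` is real, `Δ ∈ [(k+1)/2, k-1]`, and `(Δ+1)·Δ·(k-Δ) ≤ k·(k-1)`,
then `Δ = k - 1` and equality holds. -/
theorem cubic_inequality_forces_equality (k Δ : ℝ) (hk : 3 ≤ k)
    (h1 : (k + 1) / 2 ≤ Δ) (h2 : Δ ≤ k - 1)
    (h3 : (Δ + 1) * Δ * (k - Δ) ≤ k * (k - 1)) :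
    Δ = k - 1 ∧ (Δ + 1) * Δ * (k - Δ) = k * (k - 1) := by
  have hfac : (Δ + 1) * Δ * (k - Δ) - k * (k - 1) = (k - 1 - Δ) * (Δ ^ 2 - k) := by
    ring
  have hpos : 0 < Δ ^ 2 - k := by nlinarith [sq_nonneg (k - 1)]
  have heq : Δ = k - 1 := by nlinarith
  subst heq
  constructor
  · rfl
  · ring
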